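/- Let N ∈ ℕ with N ≥ 1 and d ∈ ℝ, and let a : ℕ → ℝ be the even-parity QES coefficient sequence for parameters (N, d). Then a(N+1) = 0 if and only if det P^{(N,N+1)}(d) = 0, where P^{(N,N+1)}(d) is the (N+1)×(N+1) tridiagonal matrix defined in the context. (Thus the QES-compatible shifts d are exactly the zeros of the polynomial d ↦ det P^{(N,N+1)}(d).) -/

import Mathlib

/-- The k×k tridiagonal matrix `P^(N,k)(d)` of the even-parity QES construction:
`P 0 0 = d`, `P i i = 2·i·d` for `i ≥ 1`, `P 0 1 = 1`,
`P i (i+1) = i·(i+1)` for `i ≥ 1`, `P i (i-1) = 2·(N − i + 1)`, all other entries `0`. -/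
def Pmat (N : ℕ) (d : ℝ) (k : ℕ) : Matrix (Fin k) (Fin k) ℝ :=
  Matrix.of fun i j =>
    if (i : ℕ) = 0 ∧ (j : ℕ) = 0 then d
    else if (j : ℕ) = (i : ℕ) then 2 * (i : ℝ) * d
    else if (i : ℕ) = 0 ∧ (j : ℕ) = 1 then 1
    else if (j : ℕ) = (i : ℕ) + 1 then (i : ℝ) * ((i : ℝ) + 1)
    else if (j : ℕ) + 1 = (i : ℕ) then 2 * ((N : ℝ) - (i : ℝ) + 1)
    else 0

lemma sum_if_coe_eq {k : ℕ} (c : ℕ) (x : Fin k → ℝ) :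
    ∑ j : Fin k, (if (j : ℕ) = c then x j else 0) = if h : c < k then x ⟨c, h⟩ else 0 := by
  split_ifs with h
  · rw [Finset.sum_eq_single ⟨c, h⟩]
    · simp
    · intro j _ hj
      rw [if_neg]
      intro hc
      exact hj (Fin.ext hc)
    · simp
  · apply Finset.sum_eq_zero
    intro j _
    rw [if_neg]
    omega

lemma sum_if_coe_succ_eq {k : ℕ} (c : ℕ) (x : Fin k → ℝ) :
    ∑ j : Fin k, (if (j : ℕ) + 1 = c then x j else 0)
      = if h : c - 1 < k ∧ 1 ≤ c then x ⟨c - 1, h.1⟩ else 0 := by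
  split_ifs with h
  · rw [Finset.sum_eq_single ⟨c - 1, h.1⟩]
    · have hc : c - 1 + 1 = c := by omega
      simp [hc]
    · intro j _ hj
      rw [if_neg]
      intro hc
      exact hj (Fin.ext (show (j:ℕ) = c - 1 by omega))
    · simp
  · apply Finset.sum_eq_zero
    intro j _
    rw [if_neg]
    have := j.isLt
    omega

lemma pmat_entry (N : ℕ) (d : ℝ) (k : ℕ) (i j : Fin k) (b : ℕ → ℝ) :
    Pmat N d k i j * b (j : ℕ) =
      (if (j : ℕ) + 1 = (i : ℕ) then (2 * ((N : ℝ) - (i : ℕ) + 1)) * b (j : ℕ) else 0)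
      + (if (j : ℕ) = (i : ℕ) then (if (i : ℕ) = 0 then d else 2 * ((i : ℕ) : ℝ) * d) * b (j : ℕ) else 0)
      + (if (j : ℕ) = (i : ℕ) + 1 then
          (if (i : ℕ) = 0 then 1 else ((i : ℕ) : ℝ) * (((i : ℕ) : ℝ) + 1)) * b (j : ℕ) else 0) := by
  unfold Pmat
  simp only [Matrix.of_apply]
  split_ifs <;> first | ring1 | omega

open Matrix in
lemma pmat_mulVec (N : ℕ) (d : ℝ) (b : ℕ → ℝ) (i : Fin (N + 1)) :
    (Pmat N d (N + 1) *ᵥ (fun j : Fin (N + 1) => b (j : ℕ))) i =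
      (if (i : ℕ) = 0 then 0 else 2 * ((N : ℝ) - (i : ℕ) + 1) * b ((i : ℕ) - 1))
      + (if (i : ℕ) = 0 then d else 2 * ((i : ℕ) : ℝ) * d) * b (i : ℕ)
      + (if (i : ℕ) = 0 then 1 else ((i : ℕ) : ℝ) * (((i : ℕ) : ℝ) + 1))
          * (if (i : ℕ) < N then b ((i : ℕ) + 1) else 0) := by
  show ∑ j : Fin (N + 1), Pmat N d (N + 1) i j * b (j : ℕ) = _
  simp only [pmat_entry]
  rw [Finset.sum_add_distrib, Finset.sum_add_distrib, sum_if_coe_succ_eq, sum_if_coe_eq,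
    sum_if_coe_eq]
  have hi := i.isLt
  congr 1
  · congr 1
    · split_ifs with h1 h2 h2 <;> simp_all <;> simp [h2] at h1
    · rw [dif_pos hi]
  · split_ifs with h1 h2 h2 <;> simp_all <;> omega

/-- The even-parity QES quantization condition: the terminating solutions, i.e. the
QES-compatible shifts `d`, are exactly the zeros of `d ↦ det P^(N,N+1)(d)`. -/
theorem even_parity_QES_quantization (N : ℕ) (hN : 1 ≤ N) (d : ℝ) (a : ℕ → ℝ)
    (h0 : a 0 = 1) (h1 : a 1 = -d)
    (hrec : ∀ n : ℕ, (2 * (N : ℝ) - 2 * n) * a n + 2 * d * (n + 1) * a (n + 1)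
      + (n + 1) * (n + 2) * a (n + 2) = 0) :
    a (N + 1) = 0 ↔ (Pmat N d (N + 1)).det = 0 := by
  obtain ⟨m, rfl⟩ : ∃ m, N = m + 1 := ⟨N - 1, by omega⟩
  constructor
  · intro hA
    rw [← Matrix.exists_mulVec_eq_zero_iff]
    refine ⟨fun j : Fin (m + 1 + 1) => a (j : ℕ), ?_, ?_⟩
    · intro h
      have h0' := congrFun h ⟨0, by omega⟩
      simp [h0] at h0'
    · funext i
      rw [pmat_mulVec]
      simp only [Pi.zero_apply]
      rcases Nat.eq_zero_or_pos (i : ℕ) with hz | hp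
      · rw [if_pos hz, if_pos hz, if_pos hz, hz, if_pos (show 0 < m + 1 by omega)]
        rw [h0, h1]; ring
      · obtain ⟨t, ht⟩ : ∃ t, (i : ℕ) = t + 1 := ⟨(i : ℕ) - 1, by omega⟩
        rw [if_neg (by omega), if_neg (by omega), if_neg (by omega), ht]
        simp only [Nat.add_sub_cancel]
        by_cases hiN : t + 1 < m + 1
        · rw [if_pos hiN]
          have hr := hrec t
          push_cast at hr ⊢
          linear_combination hr
        · have htm : t = m := by have := i.isLt; omega
          subst htm
          rw [if_neg hiN]
          have hr := hrec t
          push_cast at hr hA ⊢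
          linear_combination hr - ((t : ℝ) + 1) * ((t : ℝ) + 2) * hA
  · intro hdet
    obtain ⟨w, hw, hv_eq⟩ := Matrix.exists_mulVec_eq_zero_iff.mpr hdet
    set b : ℕ → ℝ := fun n => if h : n < m + 1 + 1 then w ⟨n, h⟩ else 0 with hbdef
    have hwb : w = fun j : Fin (m + 1 + 1) => b (j : ℕ) := by
      funext j
      simp [hbdef, j.isLt]
      intro h; have := j.isLt; omega
    rw [hwb] at hv_eq
    have hline : ∀ i : Fin (m + 1 + 1),
        (if (i : ℕ) = 0 then 0 else 2 * (((m + 1 : ℕ) : ℝ) - (i : ℕ) + 1) * b ((i : ℕ) - 1))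
        + (if (i : ℕ) = 0 then d else 2 * ((i : ℕ) : ℝ) * d) * b (i : ℕ)
        + (if (i : ℕ) = 0 then 1 else ((i : ℕ) : ℝ) * (((i : ℕ) : ℝ) + 1))
            * (if (i : ℕ) < m + 1 then b ((i : ℕ) + 1) else 0) = 0 := by
      intro i
      have h := congrFun hv_eq i
      rw [pmat_mulVec] at h
      simpa using h
    have hb : ∀ n, n ≤ m + 1 → b n = b 0 * a n := by
      intro n
      induction n using Nat.strong_induction_on with
      | _ n ih =>
        intro hn
        match n with
        | 0 => simp [h0]
        | 1 =>
          have h := hline ⟨0, by omega⟩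
          simp only [Fin.val_mk, if_pos rfl, if_pos (show 0 < m + 1 by omega)] at h
          norm_num at h
          rw [h1]
          linarith
        | (t + 2) =>
          have e1 := ih t (by omega) (by omega)
          have e2 := ih (t + 1) (by omega) (by omega)
          have h := hline ⟨t + 1, by omega⟩
          simp only [Fin.val_mk, if_neg (show ¬ t + 1 = 0 by omega),
            if_pos (show t + 1 < m + 1 by omega), Nat.add_sub_cancel] at h
          have hr := hrec t
          have key : ((t : ℝ) + 1) * ((t : ℝ) + 2) * b (t + 2)
              = ((t : ℝ) + 1) * ((t : ℝ) + 2) * (b 0 * a (t + 2)) := by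
            push_cast at h hr ⊢
            linear_combination h - b 0 * hr - (2 * ((m : ℝ) + 1) - 2 * t) * e1
              - 2 * d * ((t : ℝ) + 1) * e2
          have hne : ((t : ℝ) + 1) * ((t : ℝ) + 2) ≠ 0 := by positivity
          exact mul_left_cancel₀ hne key
    have hb0 : b 0 ≠ 0 := by
      intro hz
      apply hw
      funext j
      have hj := hb (j : ℕ) (by have := j.isLt; omega)
      rw [hwb]
      simp [hj, hz]
    have e1 := hb m (by omega)
    have e2 := hb (m + 1) (by omega)
    have h := hline ⟨m + 1, by omega⟩
    simp only [Fin.val_mk, if_neg (show ¬ m + 1 = 0 by omega),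
      if_neg (show ¬ m + 1 < m + 1 by omega), Nat.add_sub_cancel, mul_zero, add_zero] at h
    have hr := hrec m
    have key : b 0 * (((m : ℝ) + 1) * ((m : ℝ) + 2) * a (m + 2)) = 0 := by
      push_cast at h hr ⊢
      linear_combination b 0 * hr - h + 2 * e1 + 2 * d * ((m : ℝ) + 1) * e2
    have hne : ((m : ℝ) + 1) * ((m : ℝ) + 2) ≠ 0 := by positivity
    have := (mul_eq_zero.mp key).resolve_left hb0
    have := (mul_eq_zero.mp this).resolve_left hne
    exact_mod_cast this
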